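/- For all real parameters p₀ > 0 and q₀ > 0, one has the exact identity ∫_ℝ u₀(x)² dx = 2p₀²(1 − (1 + 2q₀)e^{−2q₀}); consequently the L²(ℝ) norm of u₀ is at most 4p₀q₀. -/

import Mathlib

open Real MeasureTheory Set Filter

/-- The peakon–antipeakon profile. -/
noncomputable def u₀ (p₀ q₀ x : ℝ) : ℝ :=
  p₀ * (Real.exp (-|x + q₀|) - Real.exp (-|x - q₀|))

lemma u0_even (p q x : ℝ) : (u₀ p q (-x)) ^ 2 = (u₀ p q x) ^ 2 := by
  unfold u₀
  rw [show -x + q = -(x - q) by ring, show -x - q = -(x + q) by ring, abs_neg, abs_neg]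
  ring

lemma g_right {p q x : ℝ} (hq : 0 < q) (hx : q < x) :
    (u₀ p q x) ^ 2 = (p ^ 2 * (Real.exp q - Real.exp (-q)) ^ 2) * Real.exp (-2 * x) := by
  unfold u₀
  rw [abs_of_pos (by linarith : (0:ℝ) < x + q), abs_of_pos (by linarith : (0:ℝ) < x - q)]
  have h1 : Real.exp (-(x + q)) = Real.exp (-x) * Real.exp (-q) := by
    rw [← Real.exp_add]; ring_nf
  have h2 : Real.exp (-(x - q)) = Real.exp (-x) * Real.exp q := by
    rw [← Real.exp_add]; ring_nf
  have h3 : Real.exp (-x) * Real.exp (-x) = Real.exp (-2 * x) := by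
    rw [← Real.exp_add]; ring_nf
  rw [h1, h2, ← h3]; ring

lemma g_mid {p q x : ℝ} (hx : x ∈ Set.Icc 0 q) :
    (u₀ p q x) ^ 2 = p ^ 2 * Real.exp (-2 * q) * (Real.exp (-x) - Real.exp x) ^ 2 := by
  obtain ⟨hx0, hxq⟩ := hx
  unfold u₀
  rw [abs_of_nonneg (by linarith : (0:ℝ) ≤ x + q), abs_of_nonpos (by linarith : x - q ≤ 0)]
  have h1 : Real.exp (-(x + q)) = Real.exp (-x) * Real.exp (-q) := by
    rw [← Real.exp_add]; ring_nf
  have h2 : Real.exp (-(-(x - q))) = Real.exp x * Real.exp (-q) := by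
    rw [← Real.exp_add]; ring_nf
  have h3 : Real.exp (-q) * Real.exp (-q) = Real.exp (-2 * q) := by
    rw [← Real.exp_add]; ring_nf
  rw [h1, h2, ← h3]; ring

lemma int_exp_neg_two (a : ℝ) :
    ∫ x in Set.Ioi a, Real.exp (-2 * x) = Real.exp (-2 * a) / 2 := by
  have hderiv : ∀ x ∈ Set.Ici a, HasDerivAt (fun y => -Real.exp (-2 * y) / 2)
      (Real.exp (-2 * x)) x := by
    intro x _
    have h := (((hasDerivAt_id x).const_mul (-2 : ℝ)).exp.neg).div_const 2
    refine HasDerivAt.congr_deriv h ?_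
    simp only [id_eq, mul_one]
    ring
  have htend : Tendsto (fun y => -Real.exp (-2 * y) / 2) atTop (nhds 0) := by
    have h1 : Tendsto (fun y : ℝ => -2 * y) atTop atBot :=
      tendsto_id.const_mul_atTop_of_neg (by norm_num)
    have h2 : Tendsto (fun y : ℝ => Real.exp (-2 * y)) atTop (nhds 0) :=
      Real.tendsto_exp_atBot.comp h1
    simpa using (h2.neg).div_const 2
  have := MeasureTheory.integral_Ioi_of_hasDerivAt_of_tendsto' hderiv
    (exp_neg_integrableOn_Ioi a (by norm_num : (0:ℝ) < 2)) htend
  rw [this]; ring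

lemma int_mid (q : ℝ) :
    ∫ x in (0:ℝ)..q, (Real.exp (-x) - Real.exp x) ^ 2
      = (Real.exp (2 * q) - Real.exp (-2 * q)) / 2 - 2 * q := by
  have hderiv : ∀ x ∈ Set.uIcc (0:ℝ) q,
      HasDerivAt (fun y => Real.exp (2 * y) / 2 - Real.exp (-2 * y) / 2 - 2 * y)
        ((Real.exp (-x) - Real.exp x) ^ 2) x := by
    intro x _
    have h1 := ((hasDerivAt_id x).const_mul (2 : ℝ)).exp.div_const 2
    have h2 := ((hasDerivAt_id x).const_mul (-2 : ℝ)).exp.div_const 2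
    have h3 := (hasDerivAt_id x).const_mul (2 : ℝ)
    have h := (h1.sub h2).sub h3
    refine HasDerivAt.congr_deriv h ?_
    have e1 : Real.exp (-x) * Real.exp (-x) = Real.exp (-2 * x) := by
      rw [← Real.exp_add]; ring_nf
    have e2 : Real.exp x * Real.exp x = Real.exp (2 * x) := by
      rw [← Real.exp_add]; ring_nf
    have e3 : Real.exp (-x) * Real.exp x = 1 := by
      rw [← Real.exp_add]; simp
    simp only [id_eq, mul_one]
    linear_combination -(e1 + e2 - 2 * e3)
  have hint : IntervalIntegrable (fun x => (Real.exp (-x) - Real.exp x) ^ 2) volume 0 q := by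
    apply Continuous.intervalIntegrable
    continuity
  have := intervalIntegral.integral_eq_sub_of_hasDerivAt hderiv hint
  rw [this]
  norm_num
  ring

theorem integral_sq_u₀_eq (p₀ q₀ : ℝ) (hp₀ : 0 < p₀) (hq₀ : 0 < q₀) :
    (∫ x : ℝ, (u₀ p₀ q₀ x) ^ 2) = 2 * p₀ ^ 2 * (1 - (1 + 2 * q₀) * Real.exp (-2 * q₀)) ∧
      Real.sqrt (∫ x : ℝ, (u₀ p₀ q₀ x) ^ 2) ≤ 4 * p₀ * q₀ := by
  set g : ℝ → ℝ := fun x => (u₀ p₀ q₀ x) ^ 2 with hg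
  have hcont : Continuous g := by
    unfold g; unfold u₀; continuity
  have hIoc : IntegrableOn g (Set.Ioc 0 q₀) := hcont.integrableOn_Ioc
  have hIoiq : IntegrableOn g (Set.Ioi q₀) := by
    have h0 : IntegrableOn (fun x => (p₀ ^ 2 * (Real.exp q₀ - Real.exp (-q₀)) ^ 2) *
        Real.exp (-2 * x)) (Set.Ioi q₀) :=
      (exp_neg_integrableOn_Ioi q₀ (by norm_num : (0:ℝ) < 2)).const_mul _
    exact h0.congr_fun (fun x hx => (g_right hq₀ hx).symm) measurableSet_Ioi
  have hIoi0 : IntegrableOn g (Set.Ioi 0) := by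
    have h := hIoc.union hIoiq
    rwa [Set.Ioc_union_Ioi_eq_Ioi hq₀.le] at h
  have hIic0 : IntegrableOn g (Set.Iic 0) := by
    have m : MeasurableEmbedding (fun x : ℝ => -x) := (Homeomorph.neg ℝ).measurableEmbedding
    rw [← Measure.map_neg_eq_self (volume : Measure ℝ), m.integrableOn_map_iff]
    have : (g ∘ fun x : ℝ => -x) = g := funext fun x => u0_even p₀ q₀ x
    rw [this]
    have : (fun x : ℝ => -x) ⁻¹' Set.Iic 0 = Set.Ici 0 := by
      ext x; simp
    rw [this]
    exact Iff.mpr integrableOn_Ici_iff_integrableOn_Ioi hIoi0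
  have hsym : ∫ x in Set.Iic (0:ℝ), g x = ∫ x in Set.Ioi (0:ℝ), g x := by
    have h1 : ∫ x in Set.Iic (0:ℝ), g x = ∫ x in Set.Iic (0:ℝ), g (-x) := by
      apply MeasureTheory.integral_congr_ae
      filter_upwards with x
      exact (u0_even p₀ q₀ x).symm
    rw [h1, integral_comp_neg_Iic, neg_zero]
  have hsplit1 : ∫ x, g x = 2 * ∫ x in Set.Ioi (0:ℝ), g x := by
    rw [← intervalIntegral.integral_Iic_add_Ioi hIic0 hIoi0, hsym]; ring
  have hsplit2 : ∫ x in Set.Ioi (0:ℝ), g x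
      = (∫ x in Set.Ioc 0 q₀, g x) + ∫ x in Set.Ioi q₀, g x := by
    rw [← MeasureTheory.setIntegral_union (Set.Ioc_disjoint_Ioi le_rfl) measurableSet_Ioi
      hIoc hIoiq, Set.Ioc_union_Ioi_eq_Ioi hq₀.le]
  have hright : ∫ x in Set.Ioi q₀, g x
      = (p₀ ^ 2 * (Real.exp q₀ - Real.exp (-q₀)) ^ 2) * (Real.exp (-2 * q₀) / 2) := by
    rw [MeasureTheory.setIntegral_congr_fun measurableSet_Ioi
      (fun x hx => g_right hq₀ hx : Set.EqOn g _ (Set.Ioi q₀))]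
    rw [MeasureTheory.integral_const_mul, int_exp_neg_two]
  have hmid : ∫ x in Set.Ioc 0 q₀, g x
      = p₀ ^ 2 * Real.exp (-2 * q₀)
        * ((Real.exp (2 * q₀) - Real.exp (-2 * q₀)) / 2 - 2 * q₀) := by
    rw [← intervalIntegral.integral_of_le hq₀.le]
    rw [intervalIntegral.integral_congr
      (g := fun x => p₀ ^ 2 * Real.exp (-2 * q₀) * (Real.exp (-x) - Real.exp x) ^ 2)
      (fun x hx => by
        rw [Set.uIcc_of_le hq₀.le] at hx
        exact g_mid hx)]
    rw [intervalIntegral.integral_const_mul, int_mid]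
  have heq : (∫ x : ℝ, (u₀ p₀ q₀ x) ^ 2)
      = 2 * p₀ ^ 2 * (1 - (1 + 2 * q₀) * Real.exp (-2 * q₀)) := by
    show (∫ x, g x) = _
    rw [hsplit1, hsplit2, hright, hmid]
    have h1 : Real.exp (2 * q₀) * Real.exp (-2 * q₀) = 1 := by
      rw [← Real.exp_add]; simp
    have h2 : Real.exp q₀ * Real.exp q₀ = Real.exp (2 * q₀) := by
      rw [← Real.exp_add]; ring_nf
    have h3 : Real.exp (-q₀) * Real.exp (-q₀) = Real.exp (-2 * q₀) := by
      rw [← Real.exp_add]; ring_nf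
    have h4 : Real.exp q₀ * Real.exp (-q₀) = 1 := by
      rw [← Real.exp_add]; simp
    linear_combination 2 * p₀ ^ 2 * h1 + p₀ ^ 2 * Real.exp (-2 * q₀) * h2
      + p₀ ^ 2 * Real.exp (-2 * q₀) * h3 - 2 * p₀ ^ 2 * Real.exp (-2 * q₀) * h4
  refine ⟨heq, ?_⟩
  rw [heq]
  have key : 2 * p₀ ^ 2 * (1 - (1 + 2 * q₀) * Real.exp (-2 * q₀)) ≤ (4 * p₀ * q₀) ^ 2 := by
    have h := Real.add_one_le_exp (-2 * q₀)
    nlinarith [mul_le_mul_of_nonneg_left h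
      (by positivity : (0:ℝ) ≤ 2 * p₀ ^ 2 * (1 + 2 * q₀)), sq_nonneg (p₀ * q₀),
      mul_pos hp₀ hq₀]
  calc Real.sqrt (2 * p₀ ^ 2 * (1 - (1 + 2 * q₀) * Real.exp (-2 * q₀)))
      ≤ Real.sqrt ((4 * p₀ * q₀) ^ 2) := Real.sqrt_le_sqrt key
    _ = 4 * p₀ * q₀ := Real.sqrt_sq (by positivity)
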